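/- arXiv:1504.02887 — 2 statements merged into one kernel-verified Lean document; each statement's English description precedes it below -/
import Mathlib

section
/- Let d ≥ 1 and n ≥ 1 be integers and let C : ℝ^d → ℝ be d times continuously differentiable on an open set containing [0,1]^d. Then for every u = (u_1,…,u_d) with u_j ∈ (0,1) for all j, the d-fold mixed partial derivative ∂^d/∂u_1⋯∂u_d of the map u ↦ C(u_1^{1/n},…,u_d^{1/n})^n equals n^{−d} (∏_{j=1}^d u_j)^{1/n−1} · ∑_{j=1}^{min(d,n)} [ (n!/(n−j)!) · C(u_1^{1/n},…,u_d^{1/n})^{n−j} · ∑_{𝒫∈𝒮_{d,j}} ∏_{M∈𝒫} ∂_M C(u_1^{1/n},…,u_d^{1/n}) ]. (This is the density of the copula C_{M^{(n)}}(u) = C(u_1^{1/n},…,u_d^{1/n})^n of the vector of componentwise block-maxima of block-size n.) -/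
open scoped Classical

noncomputable section

/-- Partial derivative of `f : ℝ^d → ℝ` with respect to the `i`-th coordinate. -/
def coordPartial {d : ℕ} (i : Fin d) (f : (Fin d → ℝ) → ℝ) : (Fin d → ℝ) → ℝ :=
  fun x => deriv (fun t => f (Function.update x i t)) (x i)

/-- Mixed partial derivative `∂_M f`, taken once with respect to each coordinate in `M`
(in increasing order of the indices). -/
def mixedPartial {d : ℕ} (M : Finset (Fin d)) (f : (Fin d → ℝ) → ℝ) : (Fin d → ℝ) → ℝ :=
  (M.sort (· ≤ ·)).foldr coordPartial f

/-- The iterated mixed partial derivative `∂^k/∂u₁⋯∂u_k` with respect to the first `k`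
coordinates. -/
def iterPartial {d : ℕ} (k : ℕ) (f : (Fin d → ℝ) → ℝ) : (Fin d → ℝ) → ℝ :=
  ((List.finRange d).take k).foldr coordPartial f

/-- `𝒮_{s,j}`: the set of set-partitions of the ground set `s` into exactly `j` nonempty
blocks, encoded as finsets of pairwise disjoint nonempty blocks whose union is `s`. -/
def setPartitions {d : ℕ} (s : Finset (Fin d)) (j : ℕ) : Finset (Finset (Finset (Fin d))) :=
  Finset.univ.filter fun P =>
    (↑P : Set (Finset (Fin d))).PairwiseDisjoint id ∧
    (∀ M ∈ P, M.Nonempty) ∧ P.sup id = s ∧ P.card = j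


lemma hasDerivAt_update_comp {d : ℕ} {f : (Fin d → ℝ) → ℝ} {x : Fin d → ℝ} (i : Fin d)
    (hf : DifferentiableAt ℝ f x) :
    HasDerivAt (fun t => f (Function.update x i t))
      (fderiv ℝ f x (Pi.single i 1)) (x i) := by
  have h2 := hasDerivAt_update x i (x i)
  have h3 : HasFDerivAt f (fderiv ℝ f x) (Function.update x i (x i)) := by
    rw [Function.update_eq_self]; exact hf.hasFDerivAt
  exact h3.comp_hasDerivAt (x i) h2

lemma coordPartial_eq_fderiv {d : ℕ} {f : (Fin d → ℝ) → ℝ} {x : Fin d → ℝ} (i : Fin d)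
    (hf : DifferentiableAt ℝ f x) :
    coordPartial i f x = fderiv ℝ f x (Pi.single i 1) :=
  (hasDerivAt_update_comp i hf).deriv

lemma hasDerivAt_coordPartial {d : ℕ} {f : (Fin d → ℝ) → ℝ} {x : Fin d → ℝ} (i : Fin d)
    (hf : DifferentiableAt ℝ f x) :
    HasDerivAt (fun t => f (Function.update x i t)) (coordPartial i f x) (x i) := by
  rw [coordPartial_eq_fderiv i hf]; exact hasDerivAt_update_comp i hf

lemma contDiffOn_coordPartial {d : ℕ} {U : Set (Fin d → ℝ)} (hU : IsOpen U)
    {f : (Fin d → ℝ) → ℝ} {k : ℕ} (hf : ContDiffOn ℝ (k + 1 : ℕ) f U) (i : Fin d) :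
    ContDiffOn ℝ (k : ℕ) (coordPartial i f) U := by
  have h1 : ContDiffOn ℝ (k : ℕ) (fun x => fderiv ℝ f x (Pi.single i 1)) U := by
    have h2 : ContDiffOn ℝ (k : ℕ) (fderiv ℝ f) U := by
      apply hf.fderiv_of_isOpen hU
      norm_cast
    exact (ContinuousLinearMap.apply ℝ ℝ (Pi.single i 1 : Fin d → ℝ)).contDiff.comp_contDiffOn h2
  apply h1.congr
  intro x hx
  have hfx : DifferentiableAt ℝ f x := by
    have h4 : ((k + 1 : ℕ) : WithTop ℕ∞) ≠ 0 := by norm_cast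
    exact ((hf.differentiableOn h4) x hx).differentiableAt (hU.mem_nhds hx)
  exact coordPartial_eq_fderiv i hfx


lemma contDiffOn_foldr {d : ℕ} {U : Set (Fin d → ℝ)} (hU : IsOpen U)
    (l : List (Fin d)) {f : (Fin d → ℝ) → ℝ} {k : ℕ}
    (hf : ContDiffOn ℝ (k + l.length : ℕ) f U) :
    ContDiffOn ℝ (k : ℕ) (l.foldr coordPartial f) U := by
  induction l generalizing k with
  | nil => simpa using hf
  | cons i l ih =>
      simp only [List.foldr_cons]
      apply contDiffOn_coordPartial hU
      apply ih
      convert hf using 2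
      simp [List.length_cons]; omega

lemma contDiffOn_mixedPartial {d : ℕ} {U : Set (Fin d → ℝ)} (hU : IsOpen U)
    (M : Finset (Fin d)) {f : (Fin d → ℝ) → ℝ} {k : ℕ}
    (hf : ContDiffOn ℝ (k + M.card : ℕ) f U) :
    ContDiffOn ℝ (k : ℕ) (mixedPartial M f) U := by
  apply contDiffOn_foldr hU
  rwa [Finset.length_sort]

lemma mixedPartial_insert {d : ℕ} {m : Fin d} {M : Finset (Fin d)} (hm : m ∉ M)
    (hle : ∀ a ∈ M, m ≤ a) (f : (Fin d → ℝ) → ℝ) :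
    mixedPartial (insert m M) f = coordPartial m (mixedPartial M f) := by
  unfold mixedPartial
  rw [Finset.sort_insert _ hle hm, List.foldr_cons]

lemma mixedPartial_empty {d : ℕ} (f : (Fin d → ℝ) → ℝ) : mixedPartial ∅ f = f := by
  simp [mixedPartial]

lemma iterPartial_eq_mixedPartial_univ {d : ℕ} (f : (Fin d → ℝ) → ℝ) :
    iterPartial d f = mixedPartial Finset.univ f := by
  unfold iterPartial mixedPartial
  rw [List.take_of_length_le (by simp), Fin.sort_univ]

variable {d : ℕ}

lemma mem_setPartitions {s : Finset (Fin d)} {j : ℕ} {P : Finset (Finset (Fin d))} :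
    P ∈ setPartitions s j ↔
      (↑P : Set (Finset (Fin d))).PairwiseDisjoint id ∧
      (∀ M ∈ P, M.Nonempty) ∧ P.sup id = s ∧ P.card = j := by
  simp [setPartitions]

lemma block_subset {s : Finset (Fin d)} {j : ℕ} {P : Finset (Finset (Fin d))}
    (hP : P ∈ setPartitions s j) {M : Finset (Fin d)} (hM : M ∈ P) : M ⊆ s := by
  rw [mem_setPartitions] at hP
  have := Finset.le_sup (f := id) hM
  rw [hP.2.2.1] at this
  exact this

lemma setPartitions_card_le {s : Finset (Fin d)} {j : ℕ} {P : Finset (Finset (Fin d))}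
    (hP : P ∈ setPartitions s j) : j ≤ s.card := by
  rw [mem_setPartitions] at hP
  obtain ⟨hdisj, hne, hsup, hcard⟩ := hP
  have h1 : s = P.biUnion id := by rw [← hsup, Finset.sup_eq_biUnion]
  have h2 : s.card = ∑ M ∈ P, M.card := by
    rw [h1]
    exact Finset.card_biUnion (fun M hM N hN hMN => hdisj hM hN hMN)
  rw [h2, ← hcard]
  calc P.card = ∑ _M ∈ P, 1 := by simp
    _ ≤ ∑ M ∈ P, M.card := Finset.sum_le_sum fun M hM => Finset.card_pos.2 (hne M hM)

lemma setPartitions_empty_zero : setPartitions (∅ : Finset (Fin d)) 0 = {∅} := by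
  ext P
  rw [mem_setPartitions]
  simp only [Finset.mem_singleton]
  constructor
  · rintro ⟨-, -, -, h⟩; exact Finset.card_eq_zero.1 h
  · rintro rfl; simp

lemma setPartitions_nonempty_zero {s : Finset (Fin d)} (hs : s.Nonempty) :
    setPartitions s 0 = ∅ := by
  ext P
  simp only [Finset.notMem_empty, iff_false, mem_setPartitions]
  rintro ⟨-, -, hsup, hcard⟩
  rw [Finset.card_eq_zero.1 hcard] at hsup
  simp at hsup
  exact hs.ne_empty hsup.symm

lemma notmem_block {t : Finset (Fin d)} {j : ℕ} {P : Finset (Finset (Fin d))}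
    (hP : P ∈ setPartitions t j) {m : Fin d} (hm : m ∉ t) {M : Finset (Fin d)}
    (hM : M ∈ P) : m ∉ M := fun h => hm (block_subset hP hM h)

lemma insertBlock_mem {m : Fin d} {t : Finset (Fin d)} (hm : m ∉ t) {j : ℕ}
    {P : Finset (Finset (Fin d))} (hP : P ∈ setPartitions t j)
    {M : Finset (Fin d)} (hM : M ∈ P) :
    insert (insert m M) (P.erase M) ∈ setPartitions (insert m t) j
    ∧ ({m} : Finset (Fin d)) ∉ insert (insert m M) (P.erase M) := by
  have hnm : ∀ M' ∈ P, m ∉ M' := fun M' hM' => notmem_block hP hm hM'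
  rw [mem_setPartitions] at hP
  obtain ⟨hdisj, hne, hsup, hcard⟩ := hP
  have hBnotin : insert m M ∉ P.erase M := by
    intro h
    exact hnm _ (Finset.mem_of_mem_erase h) (Finset.mem_insert_self m M)
  constructor
  · rw [mem_setPartitions]
    refine ⟨?_, ?_, ?_, ?_⟩
    · rw [Finset.coe_insert]
      apply (hdisj.subset (by simp [Finset.erase_subset])).insert
      intro M' hM' hne'
      have hM'P : M' ∈ P.erase M := hM'
      apply Finset.disjoint_left.2
      intro x hx hx'
      simp only [id] at hx hx'
      rcases Finset.mem_insert.1 hx with rfl | hxM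
      · exact hnm M' (Finset.mem_of_mem_erase hM'P) hx'
      · have hMM' : M ≠ M' := (Finset.ne_of_mem_erase hM'P).symm
        exact Finset.disjoint_left.1 (hdisj hM (Finset.mem_of_mem_erase hM'P) hMM') hxM hx'
    · intro M' hM'
      rcases Finset.mem_insert.1 hM' with rfl | h
      · exact ⟨m, Finset.mem_insert_self m M⟩
      · exact hne M' (Finset.mem_of_mem_erase h)
    · rw [Finset.sup_insert]
      have h1 : P.sup id = M ⊔ (P.erase M).sup id := by
        conv_lhs => rw [← Finset.insert_erase hM]
        rw [Finset.sup_insert]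
        rfl
      have h2 : (id (insert m M) : Finset (Fin d)) ⊔ (P.erase M).sup id
          = insert m (M ⊔ (P.erase M).sup id) := by
        simp only [id]
        exact Finset.insert_union m M _
      rw [h2, ← h1, hsup]
    · rw [Finset.card_insert_of_notMem hBnotin, Finset.card_erase_of_mem hM, hcard]
      have : 1 ≤ j := by
        rw [← hcard]
        exact Finset.card_pos.2 ⟨M, hM⟩
      omega
  · intro h
    rcases Finset.mem_insert.1 h with h' | h'
    · obtain ⟨x, hx⟩ := hne M hM
      have hx2 : x ∈ insert m M := Finset.mem_insert_of_mem hx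
      rw [← h', Finset.mem_singleton] at hx2
      exact hnm M hM (hx2 ▸ hx)
    · exact hnm _ (Finset.mem_of_mem_erase h') (Finset.mem_singleton_self m)

lemma part_recursion_aux {m : Fin d} {t : Finset (Fin d)} (hm : m ∉ t) (j : ℕ)
    (D : Finset (Fin d) → ℝ) :
    ∑ Q ∈ Finset.filter (fun Q => ({m} : Finset (Fin d)) ∉ Q)
        (setPartitions (insert m t) (j+1)), ∏ M ∈ Q, D M
    = ∑ P ∈ setPartitions t (j+1), ∑ M ∈ P,
        (D (insert m M) * ∏ M' ∈ P.erase M, D M') := by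
  classical
  rw [← Finset.sum_sigma (setPartitions t (j+1)) (fun P => P)
    (fun x => D (insert m x.2) * ∏ M' ∈ x.1.erase x.2, D M')]
  refine (Finset.sum_bij
    (i := fun (x : Σ _ : Finset (Finset (Fin d)), Finset (Fin d)) _ =>
      insert (insert m x.2) (x.1.erase x.2)) ?_ ?_ ?_ ?_).symm
  · -- maps into the filtered set
    rintro ⟨P, M⟩ hx
    rw [Finset.mem_sigma] at hx
    obtain ⟨hmem, hnot⟩ := insertBlock_mem hm hx.1 hx.2
    simp only [Finset.mem_filter]
    exact ⟨hmem, hnot⟩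
  · -- injective
    rintro ⟨P₁, M₁⟩ hx₁ ⟨P₂, M₂⟩ hx₂ h
    rw [Finset.mem_sigma] at hx₁ hx₂
    simp only at h hx₁ hx₂
    have hnm₁ : ∀ M' ∈ P₁, m ∉ M' := fun M' hM' => notmem_block hx₁.1 hm hM'
    have hnm₂ : ∀ M' ∈ P₂, m ∉ M' := fun M' hM' => notmem_block hx₂.1 hm hM'
    have hB : insert m M₂ = insert m M₁ := by
      have h2 : insert m M₂ ∈ insert (insert m M₁) (P₁.erase M₁) := by
        rw [h]; exact Finset.mem_insert_self _ _
      rcases Finset.mem_insert.1 h2 with h3 | h3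
      · exact h3
      · exact absurd (Finset.mem_insert_self m M₂)
          (hnm₁ _ (Finset.mem_of_mem_erase h3))
    have hMeq : M₁ = M₂ := by
      have e1 : (insert m M₁).erase m = M₁ := Finset.erase_insert (hnm₁ M₁ hx₁.2)
      have e2 : (insert m M₂).erase m = M₂ := Finset.erase_insert (hnm₂ M₂ hx₂.2)
      rw [← e1, ← e2, hB]
    have hBnotin₁ : insert m M₁ ∉ P₁.erase M₁ := fun hc =>
      hnm₁ _ (Finset.mem_of_mem_erase hc) (Finset.mem_insert_self m M₁)
    have hBnotin₂ : insert m M₂ ∉ P₂.erase M₂ := fun hc =>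
      hnm₂ _ (Finset.mem_of_mem_erase hc) (Finset.mem_insert_self m M₂)
    have hEeq : P₁.erase M₁ = P₂.erase M₂ := by
      have e1 : (insert (insert m M₁) (P₁.erase M₁)).erase (insert m M₁) = P₁.erase M₁ :=
        Finset.erase_insert hBnotin₁
      have e2 : (insert (insert m M₂) (P₂.erase M₂)).erase (insert m M₂) = P₂.erase M₂ :=
        Finset.erase_insert hBnotin₂
      rw [← e1, ← e2, h, hB]
    have hPeq : P₁ = P₂ := by
      rw [← Finset.insert_erase hx₁.2, ← Finset.insert_erase hx₂.2, hEeq, hMeq]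
    rw [hMeq, hPeq]
  · -- surjective
    intro Q hQ
    simp only [Finset.mem_filter] at hQ
    obtain ⟨hQP, hQm'⟩ := hQ
    have hmem := hQP
    rw [mem_setPartitions] at hmem
    obtain ⟨hdisj, hne, hsup, hcard⟩ := hmem
    obtain ⟨B, hBQ, hmB⟩ := Finset.mem_sup.1
      (show m ∈ Q.sup id by rw [hsup]; exact Finset.mem_insert_self m t)
    simp only [id] at hmB
    set M := B.erase m with hMdef
    have hMsubB : M ⊆ B := Finset.erase_subset m B
    have hMne : M.Nonempty := by
      rw [Finset.nonempty_iff_ne_empty]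
      intro hc
      have : B = {m} := by
        rcases (Finset.erase_eq_empty_iff B m).1 hc with h | h
        · exact absurd (h ▸ hmB) (Finset.notMem_empty m)
        · exact h
      exact hQm' (this ▸ hBQ)
    have hmM : m ∉ M := Finset.notMem_erase m B
    have hMnotin : M ∉ Q.erase B := by
      intro hc
      have hMQ : M ∈ Q := Finset.mem_of_mem_erase hc
      have hMB : M ≠ B := fun h => hmM (h ▸ hmB)
      obtain ⟨x, hx⟩ := hMne
      exact Finset.disjoint_left.1 (hdisj hMQ hBQ hMB) hx (hMsubB hx)
    have hblocksub : ∀ M' ∈ Q, M' ⊆ insert m t := fun M' hM' => block_subset hQP hM'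
    have hmonlyB : ∀ M' ∈ Q.erase B, m ∉ M' := by
      intro M' hM' hc
      have hM'B : M' ≠ B := Finset.ne_of_mem_erase hM'
      exact Finset.disjoint_left.1 (hdisj (Finset.mem_of_mem_erase hM') hBQ hM'B) hc hmB
    set P := insert M (Q.erase B) with hPdef
    have hP : P ∈ setPartitions t (j+1) := by
      rw [mem_setPartitions]
      refine ⟨?_, ?_, ?_, ?_⟩
      · rw [hPdef, Finset.coe_insert]
        apply (hdisj.subset (by simp [Finset.erase_subset])).insert
        intro M' hM' hne'
        have hM'Q : M' ∈ Q.erase B := hM'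
        have hM'B : M' ≠ B := Finset.ne_of_mem_erase hM'Q
        have : Disjoint B M' := hdisj hBQ (Finset.mem_of_mem_erase hM'Q) (Ne.symm hM'B)
        exact Finset.disjoint_of_subset_left hMsubB this
      · intro M' hM'
        rcases Finset.mem_insert.1 hM' with rfl | h
        · exact hMne
        · exact hne M' (Finset.mem_of_mem_erase h)
      · apply le_antisymm
        · rw [Finset.sup_le_iff]
          intro M' hM'
          rcases Finset.mem_insert.1 hM' with rfl | h
          · intro x hx
            have hxB : x ∈ B := hMsubB hx
            have hxm : x ≠ m := fun hc => hmM (hc ▸ hx)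
            rcases Finset.mem_insert.1 (hblocksub B hBQ hxB) with h' | h'
            · exact absurd h' hxm
            · exact h'
          · intro x hx
            have hxm : x ≠ m := fun hc => hmonlyB M' h (hc ▸ hx)
            rcases Finset.mem_insert.1 (hblocksub M' (Finset.mem_of_mem_erase h) hx) with h' | h'
            · exact absurd h' hxm
            · exact h'
        · intro x hx
          have hxm : x ≠ m := fun hc => hm (hc ▸ hx)
          have hxQ : x ∈ Q.sup id := by rw [hsup]; exact Finset.mem_insert_of_mem hx
          obtain ⟨M', hM'Q, hxM'⟩ := Finset.mem_sup.1 hxQ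
          simp only [id] at hxM'
          rcases eq_or_ne M' B with rfl | hne'
          · have : x ∈ M := Finset.mem_erase.2 ⟨hxm, hxM'⟩
            exact Finset.mem_sup.2 ⟨M, Finset.mem_insert_self _ _, this⟩
          · exact Finset.mem_sup.2 ⟨M', Finset.mem_insert_of_mem
              (Finset.mem_erase.2 ⟨hne', hM'Q⟩), hxM'⟩
      · rw [hPdef, Finset.card_insert_of_notMem hMnotin, Finset.card_erase_of_mem hBQ, hcard]
        omega
    refine ⟨⟨P, M⟩, Finset.mem_sigma.2 ⟨hP, Finset.mem_insert_self _ _⟩, ?_⟩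
    have e1 : insert m M = B := Finset.insert_erase hmB
    have e2 : P.erase M = Q.erase B := by rw [hPdef]; exact Finset.erase_insert hMnotin
    simp only
    rw [e1, e2, Finset.insert_erase hBQ]
  · -- values
    rintro ⟨P, M⟩ hx
    rw [Finset.mem_sigma] at hx
    have hnm : ∀ M' ∈ P, m ∉ M' := fun M' hM' => notmem_block hx.1 hm hM'
    have hBnotin : insert m M ∉ P.erase M := fun hc =>
      hnm _ (Finset.mem_of_mem_erase hc) (Finset.mem_insert_self m M)
    simp only
    rw [Finset.prod_insert hBnotin]

lemma part_recursion {m : Fin d} {t : Finset (Fin d)} (hm : m ∉ t) (j : ℕ)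
    (D : Finset (Fin d) → ℝ) :
    ∑ Q ∈ setPartitions (insert m t) (j+1), ∏ M ∈ Q, D M
    = D {m} * ∑ P ∈ setPartitions t j, ∏ M ∈ P, D M
      + ∑ P ∈ setPartitions t (j+1), ∑ M ∈ P,
          (D (insert m M) * ∏ M' ∈ P.erase M, D M') := by
  rw [← Finset.sum_filter_add_sum_filter_not (setPartitions (insert m t) (j+1))
    (fun Q => {m} ∈ Q)]
  congr 1
  · -- partitions containing the singleton {m}
    rw [Finset.mul_sum]
    apply Finset.sum_bij (i := fun Q _ => Q.erase ({m} : Finset (Fin d)))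
    · -- maps into setPartitions t j
      intro Q hQ
      simp only [Finset.mem_filter] at hQ
      obtain ⟨hQP, hmem⟩ := hQ
      rw [mem_setPartitions] at hQP ⊢
      obtain ⟨hdisj, hne, hsup, hcard⟩ := hQP
      have herase_sub : ∀ M ∈ Q.erase ({m} : Finset (Fin d)), M ⊆ t := by
        intro M hM
        have hMQ := Finset.mem_of_mem_erase hM
        have hMne : M ≠ ({m} : Finset (Fin d)) := Finset.ne_of_mem_erase hM
        have hdis : Disjoint M ({m} : Finset (Fin d)) := hdisj hMQ hmem hMne
        have hsub : M ⊆ insert m t := by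
          have := Finset.le_sup (f := id) hMQ; rw [hsup] at this; exact this
        intro x hx
        have hxm : x ≠ m := by
          intro h; subst h
          exact (Finset.disjoint_right.1 hdis (Finset.mem_singleton_self _)) hx
        rcases Finset.mem_insert.1 (hsub hx) with h | h
        · exact absurd h hxm
        · exact h
      refine ⟨hdisj.subset (by simp [Finset.coe_subset]), fun M hM => hne M (Finset.mem_of_mem_erase hM), ?_, ?_⟩
      · apply le_antisymm
        · rw [Finset.sup_le_iff]
          intro M hM
          exact herase_sub M hM
        · intro x hx
          have hxQ : x ∈ Q.sup id := by rw [hsup]; exact Finset.mem_insert_of_mem hx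
          obtain ⟨M, hMQ, hxM⟩ := Finset.mem_sup.1 hxQ
          have hMne : M ≠ ({m} : Finset (Fin d)) := by
            rintro rfl
            simp only [id, Finset.mem_singleton] at hxM
            subst hxM
            exact hm hx
          exact Finset.mem_sup.2 ⟨M, Finset.mem_erase.2 ⟨hMne, hMQ⟩, hxM⟩
      · rw [Finset.card_erase_of_mem hmem, hcard]; omega
    · -- injective
      intro Q₁ hQ₁ Q₂ hQ₂ h
      simp only [Finset.mem_filter] at hQ₁ hQ₂
      rw [← Finset.insert_erase hQ₁.2, ← Finset.insert_erase hQ₂.2, h]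
    · -- surjective
      intro P hP
      refine ⟨insert ({m} : Finset (Fin d)) P, ?_, ?_⟩
      · have hmP : ({m} : Finset (Fin d)) ∉ P := by
          intro h
          exact hm (block_subset hP h (Finset.mem_singleton_self m))
        rw [Finset.mem_filter, mem_setPartitions]
        rw [mem_setPartitions] at hP
        obtain ⟨hdisj, hne, hsup, hcard⟩ := hP
        refine ⟨⟨?_, ?_, ?_, ?_⟩, Finset.mem_insert_self _ _⟩
        · rw [Finset.coe_insert]
          apply hdisj.insert
          intro M hM _
          apply Finset.disjoint_left.2
          intro x hx
          simp only [id, Finset.mem_singleton] at hx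
          subst hx
          intro h
          simp only [id] at h
          exact hm (block_subset (mem_setPartitions.2 ⟨hdisj, hne, hsup, hcard⟩) hM h)
        · intro M hM
          rcases Finset.mem_insert.1 hM with rfl | h
          · exact ⟨m, Finset.mem_singleton_self m⟩
          · exact hne M h
        · rw [Finset.sup_insert, hsup]
          rfl
        · rw [Finset.card_insert_of_notMem hmP, hcard]
      · have hmP : ({m} : Finset (Fin d)) ∉ P := by
          intro h
          exact hm (block_subset hP h (Finset.mem_singleton_self m))
        rw [Finset.erase_insert hmP]
    · -- value equality
      intro Q hQ
      simp only [Finset.mem_filter] at hQ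
      rw [← Finset.prod_erase_mul _ _ hQ.2]
      ring
  · exact part_recursion_aux hm j D


lemma setPartitions_eq_empty {d : ℕ} {s : Finset (Fin d)} {j : ℕ} (h : s.card < j) :
    setPartitions s j = ∅ := by
  rw [Finset.eq_empty_iff_forall_notMem]
  intro P hP
  exact absurd (setPartitions_card_le hP) (by omega)

lemma chain_rpow {d : ℕ} (n : ℕ) {h : (Fin d → ℝ) → ℝ} {u : Fin d → ℝ} (m : Fin d)
    (hum : u m ≠ 0)
    (hdiff : DifferentiableAt ℝ h (fun i => u i ^ ((1:ℝ)/n))) :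
    HasDerivAt (fun x => h (fun i => Function.update u m x i ^ ((1:ℝ)/n)))
      (coordPartial m h (fun i => u i ^ ((1:ℝ)/n)) * ((1:ℝ)/n * u m ^ ((1:ℝ)/n - 1)))
      (u m) := by
  set w := fun i => u i ^ ((1:ℝ)/(n:ℝ)) with hw
  have hr : HasDerivAt (fun x : ℝ => x ^ ((1:ℝ)/(n:ℝ)))
      ((1:ℝ)/(n:ℝ) * u m ^ ((1:ℝ)/(n:ℝ) - 1)) (u m) :=
    Real.hasDerivAt_rpow_const (Or.inl hum)
  have hin : HasDerivAt (fun y => h (Function.update w m y)) (coordPartial m h w) (w m) :=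
    hasDerivAt_coordPartial m hdiff
  have hcomp := hin.comp (u m) hr
  have heq : ((fun y => h (Function.update w m y)) ∘ fun x : ℝ => x ^ ((1:ℝ)/(n:ℝ)))
      = fun x => h (fun i => Function.update u m x i ^ ((1:ℝ)/n)) := by
    funext x
    simp only [Function.comp]
    congr 1
    funext i
    rcases eq_or_ne i m with rfl | hi
    · simp
    · simp [Function.update_of_ne hi, hw]
  rw [heq] at hcomp
  exact hcomp

lemma algebra_step {d : ℕ} {m : Fin d} {t : Finset (Fin d)} (hmt : m ∉ t) (n : ℕ)
    (Cw r : ℝ) (D : Finset (Fin d) → ℝ) :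
    ∑ j ∈ Finset.range (t.card + 1),
      ((n.descFactorial j : ℝ) * ((↑(n - j) * Cw ^ (n - j - 1)) * (D {m} * r)) *
          (∑ P ∈ setPartitions t j, ∏ M ∈ P, D M)
        + (n.descFactorial j : ℝ) * Cw ^ (n - j) *
          (∑ P ∈ setPartitions t j, ∑ M ∈ P,
            (∏ M' ∈ P.erase M, D M') • (D (insert m M) * r)))
    = r * ∑ j ∈ Finset.range (t.card + 2), (n.descFactorial j : ℝ) * Cw ^ (n - j) *
        ∑ P ∈ setPartitions (insert m t) j, ∏ M ∈ P, D M := by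
  classical
  set h : ℕ → ℝ := fun k => (n.descFactorial k : ℝ) * Cw ^ (n - k) *
    ∑ P ∈ setPartitions t k, ∑ M ∈ P, (D (insert m M) * ∏ M' ∈ P.erase M, D M') with hh
  have h0 : h 0 = 0 := by
    rw [hh]
    simp only
    have : (∑ P ∈ setPartitions t 0, ∑ M ∈ P,
        (D (insert m M) * ∏ M' ∈ P.erase M, D M')) = 0 := by
      apply Finset.sum_eq_zero
      intro P hP
      have hc : P.card = 0 := (mem_setPartitions.1 hP).2.2.2
      rw [Finset.card_eq_zero.1 hc]
      simp
    rw [this, mul_zero]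
  have htop : h (t.card + 1) = 0 := by
    rw [hh]
    simp only
    rw [setPartitions_eq_empty (by omega)]
    simp
  have hshift : ∑ j ∈ Finset.range (t.card+1), h (j+1)
      = ∑ j ∈ Finset.range (t.card+1), h j := by
    have e1 := Finset.sum_range_succ' h (t.card+1)
    have e2 := Finset.sum_range_succ h (t.card+1)
    rw [h0, add_zero] at e1
    rw [htop, add_zero] at e2
    rw [← e1, e2]
  conv_rhs => rw [Finset.sum_range_succ']
  have h0' : (n.descFactorial 0 : ℝ) * Cw ^ (n - 0) *
      ∑ P ∈ setPartitions (insert m t) 0, ∏ M ∈ P, D M = 0 := by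
    rw [setPartitions_nonempty_zero ⟨m, Finset.mem_insert_self m t⟩]
    simp
  rw [h0', add_zero, Finset.mul_sum]
  have hterm : ∀ j ∈ Finset.range (t.card+1),
      r * ((n.descFactorial (j+1) : ℝ) * Cw ^ (n - (j+1)) *
        ∑ Q ∈ setPartitions (insert m t) (j+1), ∏ M ∈ Q, D M)
      = (n.descFactorial j : ℝ) * ((↑(n - j) * Cw ^ (n - j - 1)) * (D {m} * r)) *
          (∑ P ∈ setPartitions t j, ∏ M ∈ P, D M) + r * h (j+1) := by
    intro j hj
    rw [part_recursion hmt j D]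
    have hcast : (n.descFactorial (j+1) : ℝ) = (↑(n - j) : ℝ) * (n.descFactorial j : ℝ) := by
      rw [Nat.descFactorial_succ]; push_cast; ring
    have hnj : n - (j+1) = n - j - 1 := by omega
    simp only [hh]
    rw [hcast, hnj]
    ring
  conv_rhs => rw [Finset.sum_congr rfl hterm, Finset.sum_add_distrib, ← Finset.mul_sum, hshift]
  have hY : ∀ j ∈ Finset.range (t.card+1),
      (n.descFactorial j : ℝ) * Cw ^ (n - j) *
        (∑ P ∈ setPartitions t j, ∑ M ∈ P,
          (∏ M' ∈ P.erase M, D M') • (D (insert m M) * r))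
      = r * h j := by
    intro j hj
    have hinner : (∑ P ∈ setPartitions t j, ∑ M ∈ P,
        (∏ M' ∈ P.erase M, D M') • (D (insert m M) * r))
        = (∑ P ∈ setPartitions t j, ∑ M ∈ P,
            (D (insert m M) * ∏ M' ∈ P.erase M, D M')) * r := by
      rw [Finset.sum_mul]
      apply Finset.sum_congr rfl
      intro P _
      rw [Finset.sum_mul]
      apply Finset.sum_congr rfl
      intro M _
      rw [smul_eq_mul]
      ring
    rw [hinner, hh]
    ring
  conv_lhs => rw [Finset.sum_add_distrib, Finset.sum_congr rfl hY, ← Finset.mul_sum]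

lemma key (d n : ℕ) (C : (Fin d → ℝ) → ℝ)
    (U : Set (Fin d → ℝ)) (hU : IsOpen U) (hUsub : Set.Icc (0 : Fin d → ℝ) 1 ⊆ U)
    (hC : ContDiffOn ℝ d C U) (s : Finset (Fin d)) :
    ∀ (u : Fin d → ℝ), (∀ j, u j ∈ Set.Ioo (0:ℝ) 1) →
    mixedPartial s (fun v => C (fun i => v i ^ ((1:ℝ)/n)) ^ n) u =
      (1 / (n:ℝ) ^ s.card) * (∏ j ∈ s, u j) ^ ((1:ℝ)/n - 1) *
        ∑ j ∈ Finset.range (s.card + 1), (n.descFactorial j : ℝ) *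
          C (fun i => u i ^ ((1:ℝ)/n)) ^ (n - j) *
          ∑ P ∈ setPartitions s j, ∏ M ∈ P, mixedPartial M C (fun i => u i ^ ((1:ℝ)/n)) := by
  induction s using Finset.strongInduction with
  | _ s ih =>
  rcases s.eq_empty_or_nonempty with rfl | hs
  · intro u hu
    rw [mixedPartial_empty]
    have h1 : (0:ℝ) ≤ 1 := zero_le_one
    simp [setPartitions_empty_zero, Real.one_rpow]
  · intro u hu
    have hms : s.min' hs ∈ s := s.min'_mem hs
    set m := s.min' hs with hmdef
    set t := s.erase m with htdef
    have hmt : m ∉ t := Finset.notMem_erase m s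
    have hts : insert m t = s := Finset.insert_erase hms
    have htsub : t ⊂ s := Finset.erase_ssubset hms
    have hle : ∀ a ∈ t, m ≤ a := fun a ha => s.min'_le a (Finset.mem_of_mem_erase ha)
    have hdpos : 0 < d := m.pos
    have htlt : t.card < d := by
      have h1 : s.card ≤ d := by
        have := Finset.card_le_univ s
        simpa using this
      have h2 : t.card < s.card := Finset.card_lt_card htsub
      omega
    have humpos : (0:ℝ) < u m := (hu m).1
    have hw_mem : (fun i => u i ^ ((1:ℝ)/n)) ∈ U := by
      apply hUsub
      constructor
      · intro i; exact Real.rpow_nonneg (le_of_lt (hu i).1) _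
      · intro i
        exact Real.rpow_le_one (le_of_lt (hu i).1) (le_of_lt (hu i).2) (by positivity)
    have hdiffmp : ∀ M : Finset (Fin d), M.card < d →
        DifferentiableAt ℝ (mixedPartial M C) (fun i => u i ^ ((1:ℝ)/n)) := by
      intro M hMc
      have h1 : ContDiffOn ℝ ((d - M.card : ℕ)) (mixedPartial M C) U := by
        apply contDiffOn_mixedPartial hU
        have he : (d - M.card) + M.card = d := by omega
        rw [he]; exact hC
      have h2 : DifferentiableOn ℝ (mixedPartial M C) U := by
        apply h1.differentiableOn
        exact_mod_cast show d - M.card ≠ 0 by omega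
      exact (h2 _ hw_mem).differentiableAt (hU.mem_nhds hw_mem)
    have hdiffC : DifferentiableAt ℝ C (fun i => u i ^ ((1:ℝ)/n)) := by
      have := hdiffmp ∅ (by simpa using hdpos)
      rwa [mixedPartial_empty] at this
    set r : ℝ := (1:ℝ)/n * u m ^ ((1:ℝ)/n - 1) with hrdef
    have hchain : ∀ h' : (Fin d → ℝ) → ℝ,
        DifferentiableAt ℝ h' (fun i => u i ^ ((1:ℝ)/n)) →
        HasDerivAt (fun x => h' (fun i => Function.update u m x i ^ ((1:ℝ)/n)))
          (coordPartial m h' (fun i => u i ^ ((1:ℝ)/n)) * r) (u m) :=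
      fun h' hd => chain_rpow n m (ne_of_gt humpos) hd
    -- derivative of the partition sums
    have hT : ∀ j : ℕ, HasDerivAt
        (fun x => ∑ P ∈ setPartitions t j, ∏ M ∈ P,
            mixedPartial M C (fun i => Function.update u m x i ^ ((1:ℝ)/n)))
        (∑ P ∈ setPartitions t j, ∑ M ∈ P,
            (∏ M' ∈ P.erase M, mixedPartial M' C (fun i => u i ^ ((1:ℝ)/n))) •
              (coordPartial m (mixedPartial M C) (fun i => u i ^ ((1:ℝ)/n)) * r))
        (u m) := by
      intro j
      apply HasDerivAt.fun_sum
      intro P hP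
      have hprod := HasDerivAt.fun_finsetProd (u := P) (x := u m)
        (f := fun M x => mixedPartial M C (fun i => Function.update u m x i ^ ((1:ℝ)/n)))
        (f' := fun M => coordPartial m (mixedPartial M C) (fun i => u i ^ ((1:ℝ)/n)) * r)
        (fun M hM => hchain _ (hdiffmp M
          (lt_of_le_of_lt (Finset.card_le_card (block_subset hP hM)) htlt)))
      simpa [Function.update_eq_self] using hprod
    have hCpow : ∀ j : ℕ, HasDerivAt
        (fun x => C (fun i => Function.update u m x i ^ ((1:ℝ)/n)) ^ (n - j))
        ((↑(n - j) * C (fun i => u i ^ ((1:ℝ)/n)) ^ (n - j - 1)) *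
          (coordPartial m C (fun i => u i ^ ((1:ℝ)/n)) * r)) (u m) := by
      intro j
      have := (hchain C hdiffC).fun_pow (n - j)
      simpa [Function.update_eq_self] using this
    have hS : HasDerivAt
        (fun x => ∑ j ∈ Finset.range (t.card + 1), (n.descFactorial j : ℝ) *
            C (fun i => Function.update u m x i ^ ((1:ℝ)/n)) ^ (n - j) *
            ∑ P ∈ setPartitions t j, ∏ M ∈ P,
              mixedPartial M C (fun i => Function.update u m x i ^ ((1:ℝ)/n)))
        (∑ j ∈ Finset.range (t.card + 1),
          ((n.descFactorial j : ℝ) * ((↑(n - j) * C (fun i => u i ^ ((1:ℝ)/n)) ^ (n - j - 1)) *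
              (coordPartial m C (fun i => u i ^ ((1:ℝ)/n)) * r)) *
            (∑ P ∈ setPartitions t j, ∏ M ∈ P,
              mixedPartial M C (fun i => u i ^ ((1:ℝ)/n)))
          + (n.descFactorial j : ℝ) * C (fun i => u i ^ ((1:ℝ)/n)) ^ (n - j) *
            (∑ P ∈ setPartitions t j, ∑ M ∈ P,
              (∏ M' ∈ P.erase M, mixedPartial M' C (fun i => u i ^ ((1:ℝ)/n))) •
                (coordPartial m (mixedPartial M C) (fun i => u i ^ ((1:ℝ)/n)) * r))))
        (u m) := by
      apply HasDerivAt.fun_sum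
      intro j hj
      have h2 := ((hCpow j).const_mul ((n.descFactorial j : ℝ))).fun_mul (hT j)
      have hfix : (fun i => Function.update u m (u m) i ^ ((1:ℝ)/n))
          = fun i => u i ^ ((1:ℝ)/n) := by rw [Function.update_eq_self]
      rw [hfix] at h2
      convert h2 using 1
    have hIoo : Set.Ioo (0:ℝ) 1 ∈ nhds (u m) := Ioo_mem_nhds humpos (hu m).2
    have hev : (fun x => mixedPartial t (fun v => C (fun i => v i ^ ((1:ℝ)/n)) ^ n)
          (Function.update u m x))
        =ᶠ[nhds (u m)] fun x =>
          (1 / (n:ℝ) ^ t.card) * (∏ j ∈ t, Function.update u m x j) ^ ((1:ℝ)/n - 1) *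
            ∑ j ∈ Finset.range (t.card + 1), (n.descFactorial j : ℝ) *
              C (fun i => Function.update u m x i ^ ((1:ℝ)/n)) ^ (n - j) *
              ∑ P ∈ setPartitions t j, ∏ M ∈ P,
                mixedPartial M C (fun i => Function.update u m x i ^ ((1:ℝ)/n)) := by
      filter_upwards [hIoo] with x hx
      refine ih t htsub (Function.update u m x) (fun j => ?_)
      rcases eq_or_ne j m with rfl | hj
      · simpa using hx
      · simpa [Function.update_of_ne hj] using hu j
    set K' : ℝ := (1 / (n:ℝ) ^ t.card) * (∏ j ∈ t, u j) ^ ((1:ℝ)/n - 1) with hK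
    have hKprod : ∀ x : ℝ, (∏ j ∈ t, Function.update u m x j) = ∏ j ∈ t, u j := by
      intro x
      apply Finset.prod_congr rfl
      intro j hj
      exact Function.update_of_ne (fun (h : j = m) => hmt (h ▸ hj)) x u
    have hG : HasDerivAt (fun x =>
          (1 / (n:ℝ) ^ t.card) * (∏ j ∈ t, Function.update u m x j) ^ ((1:ℝ)/n - 1) *
            ∑ j ∈ Finset.range (t.card + 1), (n.descFactorial j : ℝ) *
              C (fun i => Function.update u m x i ^ ((1:ℝ)/n)) ^ (n - j) *
              ∑ P ∈ setPartitions t j, ∏ M ∈ P,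
                mixedPartial M C (fun i => Function.update u m x i ^ ((1:ℝ)/n)))
        (K' * (∑ j ∈ Finset.range (t.card + 1),
          ((n.descFactorial j : ℝ) * ((↑(n - j) * C (fun i => u i ^ ((1:ℝ)/n)) ^ (n - j - 1)) *
              (coordPartial m C (fun i => u i ^ ((1:ℝ)/n)) * r)) *
            (∑ P ∈ setPartitions t j, ∏ M ∈ P,
              mixedPartial M C (fun i => u i ^ ((1:ℝ)/n)))
          + (n.descFactorial j : ℝ) * C (fun i => u i ^ ((1:ℝ)/n)) ^ (n - j) *
            (∑ P ∈ setPartitions t j, ∑ M ∈ P,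
              (∏ M' ∈ P.erase M, mixedPartial M' C (fun i => u i ^ ((1:ℝ)/n))) •
                (coordPartial m (mixedPartial M C) (fun i => u i ^ ((1:ℝ)/n)) * r)))))
        (u m) := by
      have heq : (fun x : ℝ =>
          (1 / (n:ℝ) ^ t.card) * (∏ j ∈ t, Function.update u m x j) ^ ((1:ℝ)/n - 1) *
            ∑ j ∈ Finset.range (t.card + 1), (n.descFactorial j : ℝ) *
              C (fun i => Function.update u m x i ^ ((1:ℝ)/n)) ^ (n - j) *
              ∑ P ∈ setPartitions t j, ∏ M ∈ P,
                mixedPartial M C (fun i => Function.update u m x i ^ ((1:ℝ)/n)))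
          = fun x : ℝ => K' *
            ∑ j ∈ Finset.range (t.card + 1), (n.descFactorial j : ℝ) *
              C (fun i => Function.update u m x i ^ ((1:ℝ)/n)) ^ (n - j) *
              ∑ P ∈ setPartitions t j, ∏ M ∈ P,
                mixedPartial M C (fun i => Function.update u m x i ^ ((1:ℝ)/n)) := by
        funext x
        rw [hKprod x, hK]
      rw [heq]
      exact hS.const_mul K'
    have hder : mixedPartial s (fun v => C (fun i => v i ^ ((1:ℝ)/n)) ^ n) u
        = K' * (∑ j ∈ Finset.range (t.card + 1),
          ((n.descFactorial j : ℝ) * ((↑(n - j) * C (fun i => u i ^ ((1:ℝ)/n)) ^ (n - j - 1)) *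
              (coordPartial m C (fun i => u i ^ ((1:ℝ)/n)) * r)) *
            (∑ P ∈ setPartitions t j, ∏ M ∈ P,
              mixedPartial M C (fun i => u i ^ ((1:ℝ)/n)))
          + (n.descFactorial j : ℝ) * C (fun i => u i ^ ((1:ℝ)/n)) ^ (n - j) *
            (∑ P ∈ setPartitions t j, ∑ M ∈ P,
              (∏ M' ∈ P.erase M, mixedPartial M' C (fun i => u i ^ ((1:ℝ)/n))) •
                (coordPartial m (mixedPartial M C) (fun i => u i ^ ((1:ℝ)/n)) * r)))) := by
      rw [← hts, mixedPartial_insert hmt hle]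
      show deriv (fun x => mixedPartial t (fun v => C (fun i => v i ^ ((1:ℝ)/n)) ^ n)
          (Function.update u m x)) (u m) = _
      rw [hev.deriv_eq]
      exact hG.deriv
    rw [hder, ← hts, Finset.card_insert_of_notMem hmt, Finset.prod_insert hmt]
    have hsingle : mixedPartial {m} C = coordPartial m C := by
      unfold mixedPartial
      rw [Finset.sort_singleton]
      rfl
    have hSVAL_eq : (∑ j ∈ Finset.range (t.card + 1),
          ((n.descFactorial j : ℝ) * ((↑(n - j) * C (fun i => u i ^ ((1:ℝ)/n)) ^ (n - j - 1)) *
              (coordPartial m C (fun i => u i ^ ((1:ℝ)/n)) * r)) *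
            (∑ P ∈ setPartitions t j, ∏ M ∈ P,
              mixedPartial M C (fun i => u i ^ ((1:ℝ)/n)))
          + (n.descFactorial j : ℝ) * C (fun i => u i ^ ((1:ℝ)/n)) ^ (n - j) *
            (∑ P ∈ setPartitions t j, ∑ M ∈ P,
              (∏ M' ∈ P.erase M, mixedPartial M' C (fun i => u i ^ ((1:ℝ)/n))) •
                (coordPartial m (mixedPartial M C) (fun i => u i ^ ((1:ℝ)/n)) * r))))
        = ∑ j ∈ Finset.range (t.card + 1),
          ((n.descFactorial j : ℝ) * ((↑(n - j) * C (fun i => u i ^ ((1:ℝ)/n)) ^ (n - j - 1)) *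
              (mixedPartial {m} C (fun i => u i ^ ((1:ℝ)/n)) * r)) *
            (∑ P ∈ setPartitions t j, ∏ M ∈ P,
              mixedPartial M C (fun i => u i ^ ((1:ℝ)/n)))
          + (n.descFactorial j : ℝ) * C (fun i => u i ^ ((1:ℝ)/n)) ^ (n - j) *
            (∑ P ∈ setPartitions t j, ∑ M ∈ P,
              (∏ M' ∈ P.erase M, mixedPartial M' C (fun i => u i ^ ((1:ℝ)/n))) •
                (mixedPartial (insert m M) C (fun i => u i ^ ((1:ℝ)/n)) * r))) := by
      apply Finset.sum_congr rfl
      intro j hj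
      rw [hsingle]
      congr 1
      congr 1
      apply Finset.sum_congr rfl
      intro P hP
      apply Finset.sum_congr rfl
      intro M hM
      have hmM : m ∉ M := fun h => hmt (block_subset hP hM h)
      have hleM : ∀ a ∈ M, m ≤ a := fun a ha => hle a (block_subset hP hM ha)
      rw [mixedPartial_insert hmM hleM]
    rw [hSVAL_eq,
      algebra_step hmt n (C (fun i => u i ^ ((1:ℝ)/n))) r
        (fun M => mixedPartial M C (fun i => u i ^ ((1:ℝ)/n)))]
    have hpref : (1 / (n:ℝ) ^ (t.card+1)) * (u m * ∏ j ∈ t, u j) ^ ((1:ℝ)/n - 1)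
        = K' * r := by
      rw [Real.mul_rpow (le_of_lt humpos)
        (Finset.prod_nonneg (fun i _ => le_of_lt (hu i).1)), hK, hrdef]
      ring
    rw [← mul_assoc, ← hpref]


/-- Theorem 1 of the paper: the `d`-fold mixed partial derivative
`∂^d/∂u₁⋯∂u_d` of `u ↦ C(u₁^{1/n},…,u_d^{1/n})^n` — i.e. the copula density of the vector
of componentwise block-maxima of block-size `n` — equals
`n^{-d} (∏ⱼ uⱼ)^{1/n-1} ∑_{j=1}^{d∧n} (n!/(n-j)!) C(u^{1/n})^{n-j}
  ∑_{𝒫∈𝒮_{d,j}} ∏_{M∈𝒫} ∂_M C(u^{1/n})`. -/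
theorem blockMaxima_copula_density (d n : ℕ) (hd : 1 ≤ d) (hn : 1 ≤ n)
    (C : (Fin d → ℝ) → ℝ)
    (U : Set (Fin d → ℝ)) (hU : IsOpen U) (hUsub : Set.Icc (0 : Fin d → ℝ) 1 ⊆ U)
    (hC : ContDiffOn ℝ d C U)
    (u : Fin d → ℝ) (hu : ∀ j, u j ∈ Set.Ioo (0:ℝ) 1) :
    iterPartial d (fun v => C (fun i => v i ^ ((1:ℝ)/n)) ^ n) u =
      (1 / (n : ℝ) ^ d) * (∏ j, u j) ^ ((1:ℝ)/n - 1) *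
        ∑ j ∈ Finset.Icc 1 (min d n),
          (n.factorial : ℝ) / ((n - j).factorial : ℝ) *
            C (fun i => u i ^ ((1:ℝ)/n)) ^ (n - j) *
            ∑ P ∈ setPartitions (Finset.univ : Finset (Fin d)) j,
              ∏ M ∈ P, mixedPartial M C (fun i => u i ^ ((1:ℝ)/n)) := by
  have hkey := key d n C U hU hUsub hC Finset.univ u hu
  rw [iterPartial_eq_mixedPartial_univ, hkey]
  have hcard : (Finset.univ : Finset (Fin d)).card = d := by simp
  rw [hcard]
  congr 1
  have hsubset : Finset.Icc 1 (min d n) ⊆ Finset.range (d+1) := by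
    intro j hj
    simp only [Finset.mem_Icc] at hj
    simp only [Finset.mem_range]
    omega
  have hzero : ∀ j ∈ Finset.range (d+1), j ∉ Finset.Icc 1 (min d n) →
      (n.descFactorial j : ℝ) * C (fun i => u i ^ ((1:ℝ)/n)) ^ (n - j) *
        ∑ P ∈ setPartitions (Finset.univ : Finset (Fin d)) j,
          ∏ M ∈ P, mixedPartial M C (fun i => u i ^ ((1:ℝ)/n)) = 0 := by
    intro j hj hj'
    simp only [Finset.mem_range] at hj
    simp only [Finset.mem_Icc, not_and, not_le] at hj'
    rcases Nat.eq_zero_or_pos j with rfl | hjpos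
    · have huniv : (Finset.univ : Finset (Fin d)).Nonempty := ⟨⟨0, hd⟩, Finset.mem_univ _⟩
      rw [setPartitions_nonempty_zero huniv]
      simp
    · have hlt : n < j := by
        have := hj' hjpos
        omega
      rw [Nat.descFactorial_of_lt hlt]
      simp
  rw [← Finset.sum_subset hsubset hzero]
  apply Finset.sum_congr rfl
  intro j hj
  simp only [Finset.mem_Icc] at hj
  have hjn : j ≤ n := le_trans hj.2 (min_le_right d n)
  have hfact : (n.descFactorial j : ℝ) = (n.factorial : ℝ) / ((n - j).factorial : ℝ) := by
    rw [eq_div_iff (by exact_mod_cast (n - j).factorial_ne_zero)]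
    have h := Nat.factorial_mul_descFactorial hjn
    exact_mod_cast by rw [mul_comm]; exact h
  rw [hfact]

end
end

section
/- For all (u_1,u_2,u_3) ∈ [0,1]³, the three-dimensional vine copula satisfies C(u_1,u_2,u_3) = ∫_0^{u_2} C_{13;2}( C_{1|2}(u_1|v_2), C_{3|2}(u_3|v_2) ) dv_2. -/
noncomputable section

/-- The density of a bivariate copula: the mixed second partial derivative `∂²C/∂s∂t`. -/
def copDens (C : ℝ × ℝ → ℝ) (s t : ℝ) : ℝ :=
  deriv (fun a => deriv (fun b => C (a, b)) t) s

/-- The conditional distribution function `C_{1|2}(u₁|u₂) = ∂C₁₂(u₁,u₂)/∂u₂`. -/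
def cond12 (C12 : ℝ × ℝ → ℝ) (u1 u2 : ℝ) : ℝ :=
  deriv (fun b => C12 (u1, b)) u2

/-- The conditional distribution function `C_{3|2}(u₃|u₂) = ∂C₂₃(u₂,u₃)/∂u₂`. -/
def cond32 (C23 : ℝ × ℝ → ℝ) (u3 u2 : ℝ) : ℝ :=
  deriv (fun a => C23 (a, u3)) u2

/-- `∂₁C(x,y) = ∂C(x,y)/∂x`. -/
def pdFst (C : ℝ × ℝ → ℝ) (x y : ℝ) : ℝ := deriv (fun a => C (a, y)) x

/-- `∂₃C(x,y) = ∂C(x,y)/∂y` (derivative in the second argument). -/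
def pdSnd (C : ℝ × ℝ → ℝ) (x y : ℝ) : ℝ := deriv (fun b => C (x, b)) y

/-- The three-dimensional vine copula built from the pair copulas `C₁₂, C₂₃, C₁₃;₂`:
`C(u₁,u₂,u₃) = ∫₀^{u₁}∫₀^{u₂}∫₀^{u₃} c₁₂(v₁,v₂) c₂₃(v₂,v₃)
  c₁₃;₂(C_{1|2}(v₁|v₂), C_{3|2}(v₃|v₂)) dv₃ dv₂ dv₁`. -/
def vine (C12 C23 C132 : ℝ × ℝ → ℝ) (u1 u2 u3 : ℝ) : ℝ :=
  ∫ v1 in (0:ℝ)..u1, ∫ v2 in (0:ℝ)..u2, ∫ v3 in (0:ℝ)..u3,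
    copDens C12 v1 v2 * copDens C23 v2 v3 *
      copDens C132 (cond12 C12 v1 v2) (cond32 C23 v3 v2)

open Set MeasureTheory

section VineAux

variable {U : Set (ℝ × ℝ)} {C : ℝ × ℝ → ℝ}

lemma hasDerivAt_snd (hU : IsOpen U) (hC : ContDiffOn ℝ 2 C U) {p : ℝ × ℝ} (hp : p ∈ U) :
    HasDerivAt (fun y => C (p.1, y)) (fderiv ℝ C p ((0:ℝ),(1:ℝ))) p.2 := by
  have hd : DifferentiableAt ℝ C p :=
    (hC.contDiffAt (hU.mem_nhds hp)).differentiableAt two_ne_zero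
  have hF : HasFDerivAt C (fderiv ℝ C p) (p.1, p.2) := by simpa using hd.hasFDerivAt
  have hc : HasDerivAt (fun y : ℝ => ((p.1, y) : ℝ × ℝ)) ((0:ℝ),(1:ℝ)) p.2 :=
    (hasDerivAt_const _ _).prodMk (hasDerivAt_id _)
  exact hF.comp_hasDerivAt p.2 hc

lemma hasDerivAt_fst (hU : IsOpen U) (hC : ContDiffOn ℝ 2 C U) {p : ℝ × ℝ} (hp : p ∈ U) :
    HasDerivAt (fun x => C (x, p.2)) (fderiv ℝ C p ((1:ℝ),(0:ℝ))) p.1 := by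
  have hd : DifferentiableAt ℝ C p :=
    (hC.contDiffAt (hU.mem_nhds hp)).differentiableAt two_ne_zero
  have hF : HasFDerivAt C (fderiv ℝ C p) (p.1, p.2) := by simpa using hd.hasFDerivAt
  have hc : HasDerivAt (fun x : ℝ => ((x, p.2) : ℝ × ℝ)) ((1:ℝ),(0:ℝ)) p.1 :=
    (hasDerivAt_id _).prodMk (hasDerivAt_const _ _)
  exact hF.comp_hasDerivAt p.1 hc


lemma fderiv_hasFDerivAt (hU : IsOpen U) (hC : ContDiffOn ℝ 2 C U) {p : ℝ × ℝ} (hp : p ∈ U) :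
    HasFDerivAt (fderiv ℝ C) (fderiv ℝ (fderiv ℝ C) p) p := by
  have h1 : ContDiffOn ℝ 1 (fderiv ℝ C) U := hC.fderiv_of_isOpen hU (by norm_num)
  exact ((h1.differentiableOn one_ne_zero).differentiableAt (hU.mem_nhds hp)).hasFDerivAt

lemma hasDerivAt_fst_apply (hU : IsOpen U) (hC : ContDiffOn ℝ 2 C U) {p : ℝ × ℝ} (hp : p ∈ U)
    (w : ℝ × ℝ) :
    HasDerivAt (fun x => fderiv ℝ C (x, p.2) w)
      (fderiv ℝ (fderiv ℝ C) p ((1:ℝ),(0:ℝ)) w) p.1 := by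
  have hF : HasFDerivAt (fderiv ℝ C) (fderiv ℝ (fderiv ℝ C) p) (p.1, p.2) := by
    simpa using fderiv_hasFDerivAt hU hC hp
  have hc : HasDerivAt (fun x : ℝ => ((x, p.2) : ℝ × ℝ)) ((1:ℝ),(0:ℝ)) p.1 :=
    (hasDerivAt_id _).prodMk (hasDerivAt_const _ _)
  have he : HasFDerivAt (fun L : (ℝ × ℝ) →L[ℝ] ℝ => L w)
      (ContinuousLinearMap.apply ℝ ℝ w) (fderiv ℝ C (p.1, p.2)) :=
    (ContinuousLinearMap.apply ℝ ℝ w).hasFDerivAt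
  have := he.comp_hasDerivAt p.1 (hF.comp_hasDerivAt p.1 hc)
  simpa [Function.comp_def] using this

lemma hasDerivAt_snd_apply (hU : IsOpen U) (hC : ContDiffOn ℝ 2 C U) {p : ℝ × ℝ} (hp : p ∈ U)
    (w : ℝ × ℝ) :
    HasDerivAt (fun y => fderiv ℝ C (p.1, y) w)
      (fderiv ℝ (fderiv ℝ C) p ((0:ℝ),(1:ℝ)) w) p.2 := by
  have hF : HasFDerivAt (fderiv ℝ C) (fderiv ℝ (fderiv ℝ C) p) (p.1, p.2) := by
    simpa using fderiv_hasFDerivAt hU hC hp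
  have hc : HasDerivAt (fun y : ℝ => ((p.1, y) : ℝ × ℝ)) ((0:ℝ),(1:ℝ)) p.2 :=
    (hasDerivAt_const _ _).prodMk (hasDerivAt_id _)
  have he : HasFDerivAt (fun L : (ℝ × ℝ) →L[ℝ] ℝ => L w)
      (ContinuousLinearMap.apply ℝ ℝ w) (fderiv ℝ C (p.1, p.2)) :=
    (ContinuousLinearMap.apply ℝ ℝ w).hasFDerivAt
  have := he.comp_hasDerivAt p.2 (hF.comp_hasDerivAt p.2 hc)
  simpa [Function.comp_def] using this

lemma schwarz (hU : IsOpen U) (hC : ContDiffOn ℝ 2 C U) {p : ℝ × ℝ} (hp : p ∈ U) (v w : ℝ × ℝ) :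
    fderiv ℝ (fderiv ℝ C) p v w = fderiv ℝ (fderiv ℝ C) p w v :=
  (hC.contDiffAt (hU.mem_nhds hp)).isSymmSndFDerivAt (by norm_num) v w



lemma cond12_eq (hU : IsOpen U) (hC : ContDiffOn ℝ 2 C U) {x y : ℝ} (hp : (x, y) ∈ U) :
    cond12 C x y = fderiv ℝ C (x, y) ((0:ℝ),(1:ℝ)) :=
  (hasDerivAt_snd hU hC hp).deriv

lemma cond32_eq (hU : IsOpen U) (hC : ContDiffOn ℝ 2 C U) {x y : ℝ} (hp : (y, x) ∈ U) :
    cond32 C x y = fderiv ℝ C (y, x) ((1:ℝ),(0:ℝ)) :=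
  (hasDerivAt_fst hU hC hp).deriv

lemma pdFst_eq (hU : IsOpen U) (hC : ContDiffOn ℝ 2 C U) {x y : ℝ} (hp : (x, y) ∈ U) :
    pdFst C x y = fderiv ℝ C (x, y) ((1:ℝ),(0:ℝ)) :=
  (hasDerivAt_fst hU hC hp).deriv

lemma copDens_eq (hU : IsOpen U) (hC : ContDiffOn ℝ 2 C U) {x y : ℝ} (hp : (x, y) ∈ U) :
    copDens C x y = fderiv ℝ (fderiv ℝ C) (x, y) ((1:ℝ),(0:ℝ)) ((0:ℝ),(1:ℝ)) := by
  have hev : ∀ᶠ a in nhds x, deriv (fun b => C (a, b)) y = fderiv ℝ C (a, y) ((0:ℝ),(1:ℝ)) := by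
    have hop : IsOpen {a : ℝ | (a, y) ∈ U} := hU.preimage (by fun_prop)
    filter_upwards [hop.mem_nhds hp] with a ha
    exact (hasDerivAt_snd hU hC ha).deriv
  have h1 : deriv (fun a => deriv (fun b => C (a, b)) y) x
      = deriv (fun a => fderiv ℝ C (a, y) ((0:ℝ),(1:ℝ))) x :=
    Filter.EventuallyEq.deriv_eq hev
  rw [copDens, h1]
  exact (hasDerivAt_fst_apply hU hC hp ((0:ℝ),(1:ℝ))).deriv

/-- derivative of `v1 ↦ cond12 C v1 v2` is `copDens C v1 v2`. -/
lemma hasDerivAt_cond12_fst (hU : IsOpen U) (hC : ContDiffOn ℝ 2 C U) {x y : ℝ}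
    (hp : (x, y) ∈ U) :
    HasDerivAt (fun a => cond12 C a y) (copDens C x y) x := by
  have h := hasDerivAt_fst_apply hU hC hp ((0:ℝ),(1:ℝ))
  rw [copDens_eq hU hC hp]
  apply h.congr_of_eventuallyEq
  have hop : IsOpen {a : ℝ | (a, y) ∈ U} := hU.preimage (by fun_prop)
  filter_upwards [hop.mem_nhds hp] with a ha
  exact cond12_eq hU hC ha

/-- derivative of `v3 ↦ cond32 C v3 v2` is `copDens C v2 v3`. -/
lemma hasDerivAt_cond32_fst (hU : IsOpen U) (hC : ContDiffOn ℝ 2 C U) {v2 v3 : ℝ}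
    (hp : (v2, v3) ∈ U) :
    HasDerivAt (fun a => cond32 C a v2) (copDens C v2 v3) v3 := by
  have h := hasDerivAt_snd_apply hU hC hp ((1:ℝ),(0:ℝ))
  rw [copDens_eq hU hC hp, ← schwarz hU hC hp]
  apply h.congr_of_eventuallyEq
  have hop : IsOpen {b : ℝ | (v2, b) ∈ U} := hU.preimage (by fun_prop)
  filter_upwards [hop.mem_nhds hp] with b hb
  exact cond32_eq hU hC hb

/-- derivative of `y ↦ pdFst C x y` is `copDens C x y`. -/
lemma hasDerivAt_pdFst_snd (hU : IsOpen U) (hC : ContDiffOn ℝ 2 C U) {x y : ℝ}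
    (hp : (x, y) ∈ U) :
    HasDerivAt (fun b => pdFst C x b) (copDens C x y) y := by
  have h := hasDerivAt_snd_apply hU hC hp ((1:ℝ),(0:ℝ))
  rw [copDens_eq hU hC hp, ← schwarz hU hC hp]
  apply h.congr_of_eventuallyEq
  have hop : IsOpen {b : ℝ | (x, b) ∈ U} := hU.preimage (by fun_prop)
  filter_upwards [hop.mem_nhds hp] with b hb
  exact pdFst_eq hU hC hb

/-- derivative of `x ↦ C (x, y)` is `pdFst C x y`. -/
lemma hasDerivAt_C_fst (hU : IsOpen U) (hC : ContDiffOn ℝ 2 C U) {x y : ℝ}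
    (hp : (x, y) ∈ U) :
    HasDerivAt (fun a => C (a, y)) (pdFst C x y) x := by
  rw [pdFst_eq hU hC hp]; exact hasDerivAt_fst hU hC hp

end VineAux

section VineAux2
variable {U : Set (ℝ × ℝ)} {C : ℝ × ℝ → ℝ}

lemma continuousOn_fderiv_apply (hU : IsOpen U) (hC : ContDiffOn ℝ 2 C U) (w : ℝ × ℝ) :
    ContinuousOn (fun p => fderiv ℝ C p w) U :=
  (hC.continuousOn_fderiv_of_isOpen hU (by norm_num)).clm_apply continuousOn_const

lemma continuousOn_copDens (hU : IsOpen U) (hC : ContDiffOn ℝ 2 C U) :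
    ContinuousOn (fun p : ℝ × ℝ => copDens C p.1 p.2) U := by
  have h1 : ContDiffOn ℝ 1 (fderiv ℝ C) U := hC.fderiv_of_isOpen hU (by norm_num)
  have h2 : ContinuousOn (fderiv ℝ (fderiv ℝ C)) U :=
    h1.continuousOn_fderiv_of_isOpen hU le_rfl
  have h3 : ContinuousOn
      (fun p => fderiv ℝ (fderiv ℝ C) p ((1:ℝ),(0:ℝ)) ((0:ℝ),(1:ℝ))) U :=
    (h2.clm_apply continuousOn_const).clm_apply continuousOn_const
  exact h3.congr fun p hp => by
    simpa using copDens_eq hU hC (x := p.1) (y := p.2) (by simpa using hp)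

lemma continuousOn_cond12 (hU : IsOpen U) (hC : ContDiffOn ℝ 2 C U) :
    ContinuousOn (fun p : ℝ × ℝ => cond12 C p.1 p.2) U :=
  (continuousOn_fderiv_apply hU hC ((0:ℝ),(1:ℝ))).congr fun p hp => by
    simpa using cond12_eq hU hC (x := p.1) (y := p.2) (by simpa using hp)

lemma continuousOn_pdFst (hU : IsOpen U) (hC : ContDiffOn ℝ 2 C U) :
    ContinuousOn (fun p : ℝ × ℝ => pdFst C p.1 p.2) U :=
  (continuousOn_fderiv_apply hU hC ((1:ℝ),(0:ℝ))).congr fun p hp => by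
    simpa using pdFst_eq hU hC (x := p.1) (y := p.2) (by simpa using hp)

/-- `cond32` as a function of `(u2, u3)`. -/
lemma continuousOn_cond32 (hU : IsOpen U) (hC : ContDiffOn ℝ 2 C U) :
    ContinuousOn (fun p : ℝ × ℝ => cond32 C p.2 p.1) U :=
  (continuousOn_fderiv_apply hU hC ((1:ℝ),(0:ℝ))).congr fun p hp => by
    simpa using cond32_eq hU hC (x := p.2) (y := p.1) (by simpa using hp)

lemma deriv_eq_zero_of_Icc {f : ℝ → ℝ} {x : ℝ} (hf : DifferentiableAt ℝ f x)
    (hx : x ∈ Icc (0:ℝ) 1) (h0 : ∀ t ∈ Icc (0:ℝ) 1, f t = 0) : deriv f x = 0 := by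
  have hu : UniqueDiffWithinAt ℝ (Icc (0:ℝ) 1) x := (uniqueDiffOn_Icc one_pos) x hx
  have h1 : HasDerivWithinAt f (deriv f x) (Icc (0:ℝ) 1) x :=
    hf.hasDerivAt.hasDerivWithinAt
  have h2 : HasDerivWithinAt f 0 (Icc (0:ℝ) 1) x :=
    (hasDerivWithinAt_const x _ (0:ℝ)).congr (fun t ht => h0 t ht) (h0 x hx)
  rw [← h1.derivWithin hu, h2.derivWithin hu]

end VineAux2

/-- the vine copula satisfies C(u₁,u₂,u₃) = ∫₀^{u₂} C₁₃;₂(C_{1|2}(u₁|v₂), C_{3|2}(u₃|v₂)) dv₂. -/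
theorem vine_eq_integral
    (C12 C23 C132 : ℝ × ℝ → ℝ)
    (U : Set (ℝ × ℝ)) (hU : IsOpen U)
    (hUsub : Set.Icc ((0 : ℝ), (0 : ℝ)) (1, 1) ⊆ U)
    (h12 : ContDiffOn ℝ 2 C12 U) (h23 : ContDiffOn ℝ 2 C23 U)
    (h132 : ContDiffOn ℝ 2 C132 U)
    (hb12 : ∀ t ∈ Set.Icc (0:ℝ) 1, C12 (0, t) = 0 ∧ C12 (t, 0) = 0)
    (hb23 : ∀ t ∈ Set.Icc (0:ℝ) 1, C23 (0, t) = 0 ∧ C23 (t, 0) = 0)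
    (hb132 : ∀ t ∈ Set.Icc (0:ℝ) 1, C132 (0, t) = 0 ∧ C132 (t, 0) = 0)
    (hr12 : ∀ u1 ∈ Set.Icc (0:ℝ) 1, ∀ u2 ∈ Set.Icc (0:ℝ) 1,
      cond12 C12 u1 u2 ∈ Set.Icc (0:ℝ) 1)
    (hr32 : ∀ u3 ∈ Set.Icc (0:ℝ) 1, ∀ u2 ∈ Set.Icc (0:ℝ) 1,
      cond32 C23 u3 u2 ∈ Set.Icc (0:ℝ) 1)
    (u1 u2 u3 : ℝ) (hu1 : u1 ∈ Set.Icc (0:ℝ) 1) (hu2 : u2 ∈ Set.Icc (0:ℝ) 1)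
    (hu3 : u3 ∈ Set.Icc (0:ℝ) 1) :
    vine C12 C23 C132 u1 u2 u3 =
      ∫ v2 in (0:ℝ)..u2, C132 (cond12 C12 u1 v2, cond32 C23 u3 v2) := by
  have hmem : ∀ {x y : ℝ}, x ∈ Set.Icc (0:ℝ) 1 → y ∈ Set.Icc (0:ℝ) 1 → (x, y) ∈ U :=
    fun hx hy => hUsub ⟨⟨hx.1, hy.1⟩, hx.2, hy.2⟩
  have hsub : Icc (0:ℝ) 1 ×ˢ Icc (0:ℝ) 1 ⊆ U := fun p hp => hmem hp.1 hp.2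
  have hI1 : Icc (0:ℝ) u1 ⊆ Icc (0:ℝ) 1 := Icc_subset_Icc le_rfl hu1.2
  have hI2 : Icc (0:ℝ) u2 ⊆ Icc (0:ℝ) 1 := Icc_subset_Icc le_rfl hu2.2
  have hI3 : Icc (0:ℝ) u3 ⊆ Icc (0:ℝ) 1 := Icc_subset_Icc le_rfl hu3.2
  -- boundary values
  have hg0 : ∀ v2 ∈ Icc (0:ℝ) 1, cond12 C12 0 v2 = 0 := by
    intro v2 hv2
    have hd : DifferentiableAt ℝ (fun b => C12 (0, b)) v2 :=
      (hasDerivAt_snd hU h12 (hmem (left_mem_Icc.2 one_pos.le) hv2)).differentiableAt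
    exact deriv_eq_zero_of_Icc hd hv2 (fun t ht => (hb12 t ht).1)
  have hh0 : ∀ v2 ∈ Icc (0:ℝ) 1, cond32 C23 0 v2 = 0 := by
    intro v2 hv2
    have hd : DifferentiableAt ℝ (fun a => C23 (a, 0)) v2 :=
      (hasDerivAt_fst hU h23 (hmem hv2 (left_mem_Icc.2 one_pos.le))).differentiableAt
    exact deriv_eq_zero_of_Icc hd hv2 (fun t ht => (hb23 t ht).2)
  have hpd0 : ∀ x ∈ Icc (0:ℝ) 1, pdFst C132 x 0 = 0 := by
    intro x hx
    have hd : DifferentiableAt ℝ (fun a => C132 (a, 0)) x :=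
      (hasDerivAt_fst hU h132 (hmem hx (left_mem_Icc.2 one_pos.le))).differentiableAt
    exact deriv_eq_zero_of_Icc hd hx (fun t ht => (hb132 t ht).2)
  -- Step A : the inner integral over v3
  have stepA : ∀ v1 ∈ Icc (0:ℝ) 1, ∀ v2 ∈ Icc (0:ℝ) 1,
      (∫ v3 in (0:ℝ)..u3, copDens C12 v1 v2 * copDens C23 v2 v3 *
        copDens C132 (cond12 C12 v1 v2) (cond32 C23 v3 v2))
      = copDens C12 v1 v2 * pdFst C132 (cond12 C12 v1 v2) (cond32 C23 u3 v2) := by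
    intro v1 hv1 v2 hv2
    set k := copDens C12 v1 v2 with hk
    set x := cond12 C12 v1 v2 with hx
    have hxI : x ∈ Icc (0:ℝ) 1 := hr12 v1 hv1 v2 hv2
    have key : (∫ v3 in (0:ℝ)..u3,
        k * copDens C23 v2 v3 * copDens C132 x (cond32 C23 v3 v2))
        = (k * pdFst C132 x (cond32 C23 u3 v2)) - (k * pdFst C132 x (cond32 C23 0 v2)) := by
      apply intervalIntegral.integral_eq_sub_of_hasDerivAt
      · intro t ht
        rw [Set.uIcc_of_le hu3.1] at ht
        have htI : t ∈ Icc (0:ℝ) 1 := hI3 ht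
        have hht : cond32 C23 t v2 ∈ Icc (0:ℝ) 1 := hr32 t htI v2 hv2
        have h1 : HasDerivAt (fun s => cond32 C23 s v2) (copDens C23 v2 t) t :=
          hasDerivAt_cond32_fst hU h23 (hmem hv2 htI)
        have h2 : HasDerivAt (fun b => pdFst C132 x b)
            (copDens C132 x (cond32 C23 t v2)) (cond32 C23 t v2) :=
          hasDerivAt_pdFst_snd hU h132 (hmem hxI hht)
        have h3 := (h2.comp t h1).const_mul k
        exact h3.congr_deriv (by ring)
      · -- integrability by continuity
        apply ContinuousOn.intervalIntegrable
        rw [Set.uIcc_of_le hu3.1]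
        have c1 : ContinuousOn (fun t => copDens C23 v2 t) (Icc (0:ℝ) u3) := by
          apply (continuousOn_copDens hU h23).comp (by fun_prop : Continuous
            (fun t : ℝ => ((v2, t) : ℝ × ℝ))).continuousOn
          exact fun t ht => hmem hv2 (hI3 ht)
        have c2 : ContinuousOn (fun t => cond32 C23 t v2) (Icc (0:ℝ) u3) := by
          apply (continuousOn_cond32 hU h23).comp (by fun_prop : Continuous
            (fun t : ℝ => ((v2, t) : ℝ × ℝ))).continuousOn
          exact fun t ht => hmem hv2 (hI3 ht)
        have c3 : ContinuousOn (fun t => copDens C132 x (cond32 C23 t v2)) (Icc (0:ℝ) u3) := by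
          apply (continuousOn_copDens hU h132).comp
            ((continuousOn_const (c := x)).prodMk c2)
          exact fun t ht => hmem hxI (hr32 t (hI3 ht) v2 hv2)
        exact (continuousOn_const.mul c1).mul c3
    rw [hh0 v2 hv2, hpd0 x hxI, mul_zero, sub_zero] at key
    exact key

  have stepB : ∀ v2 ∈ Icc (0:ℝ) 1,
      (∫ v1 in (0:ℝ)..u1,
        copDens C12 v1 v2 * pdFst C132 (cond12 C12 v1 v2) (cond32 C23 u3 v2))
      = C132 (cond12 C12 u1 v2, cond32 C23 u3 v2) := by
    intro v2 hv2
    set y := cond32 C23 u3 v2 with hy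
    have hyI : y ∈ Icc (0:ℝ) 1 := hr32 u3 hu3 v2 hv2
    have key : (∫ v1 in (0:ℝ)..u1,
        copDens C12 v1 v2 * pdFst C132 (cond12 C12 v1 v2) y)
        = C132 (cond12 C12 u1 v2, y) - C132 (cond12 C12 0 v2, y) := by
      apply intervalIntegral.integral_eq_sub_of_hasDerivAt
      · intro t ht
        rw [Set.uIcc_of_le hu1.1] at ht
        have htI : t ∈ Icc (0:ℝ) 1 := hI1 ht
        have hgt : cond12 C12 t v2 ∈ Icc (0:ℝ) 1 := hr12 t htI v2 hv2
        have h1 : HasDerivAt (fun a => cond12 C12 a v2) (copDens C12 t v2) t :=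
          hasDerivAt_cond12_fst hU h12 (hmem htI hv2)
        have h2 : HasDerivAt (fun a => C132 (a, y)) (pdFst C132 (cond12 C12 t v2) y)
            (cond12 C12 t v2) := hasDerivAt_C_fst hU h132 (hmem hgt hyI)
        have h3 := h2.comp t h1
        exact h3.congr_deriv (by ring)
      · apply ContinuousOn.intervalIntegrable
        rw [Set.uIcc_of_le hu1.1]
        have c1 : ContinuousOn (fun t => copDens C12 t v2) (Icc (0:ℝ) u1) := by
          apply (continuousOn_copDens hU h12).comp (by fun_prop : Continuous
            (fun t : ℝ => ((t, v2) : ℝ × ℝ))).continuousOn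
          exact fun t ht => hmem (hI1 ht) hv2
        have c2 : ContinuousOn (fun t => cond12 C12 t v2) (Icc (0:ℝ) u1) := by
          apply (continuousOn_cond12 hU h12).comp (by fun_prop : Continuous
            (fun t : ℝ => ((t, v2) : ℝ × ℝ))).continuousOn
          exact fun t ht => hmem (hI1 ht) hv2
        have c3 : ContinuousOn (fun t => pdFst C132 (cond12 C12 t v2) y) (Icc (0:ℝ) u1) := by
          apply (continuousOn_pdFst hU h132).comp (c2.prodMk continuousOn_const)
          exact fun t ht => hmem (hr12 t (hI1 ht) v2 hv2) hyI
        exact c1.mul c3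
    rw [key, hg0 v2 hv2, (hb132 y hyI).1, sub_zero]
  have hFc : ContinuousOn (fun p : ℝ × ℝ =>
      copDens C12 p.1 p.2 * pdFst C132 (cond12 C12 p.1 p.2) (cond32 C23 u3 p.2))
      (Icc (0:ℝ) 1 ×ˢ Icc (0:ℝ) 1) := by
    have c1 := (continuousOn_copDens hU h12).mono hsub
    have c2 := (continuousOn_cond12 hU h12).mono hsub
    have c3 : ContinuousOn (fun p : ℝ × ℝ => cond32 C23 u3 p.2)
        (Icc (0:ℝ) 1 ×ˢ Icc (0:ℝ) 1) := by
      apply (continuousOn_cond32 hU h23).comp (by fun_prop : Continuous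
        (fun p : ℝ × ℝ => ((p.2, u3) : ℝ × ℝ))).continuousOn
      exact fun p hp => hmem hp.2 hu3
    have c4 : ContinuousOn (fun p : ℝ × ℝ =>
        pdFst C132 (cond12 C12 p.1 p.2) (cond32 C23 u3 p.2))
        (Icc (0:ℝ) 1 ×ˢ Icc (0:ℝ) 1) := by
      apply (continuousOn_pdFst hU h132).comp (c2.prodMk c3)
      exact fun p hp => hmem (hr12 p.1 hp.1 p.2 hp.2) (hr32 u3 hu3 p.2 hp.2)
    exact c1.mul c4
  have swap : (∫ v1 in (0:ℝ)..u1, ∫ v2 in (0:ℝ)..u2,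
        copDens C12 v1 v2 * pdFst C132 (cond12 C12 v1 v2) (cond32 C23 u3 v2))
      = ∫ v2 in (0:ℝ)..u2, ∫ v1 in (0:ℝ)..u1,
        copDens C12 v1 v2 * pdFst C132 (cond12 C12 v1 v2) (cond32 C23 u3 v2) := by
    simp_rw [intervalIntegral.integral_of_le hu1.1, intervalIntegral.integral_of_le hu2.1]
    apply MeasureTheory.integral_integral_swap
    have hint : IntegrableOn (fun p : ℝ × ℝ =>
        copDens C12 p.1 p.2 * pdFst C132 (cond12 C12 p.1 p.2) (cond32 C23 u3 p.2))
        (Icc (0:ℝ) 1 ×ˢ Icc (0:ℝ) 1) volume :=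
      hFc.integrableOn_compact (isCompact_Icc.prod isCompact_Icc)
    have hint2 : IntegrableOn (fun p : ℝ × ℝ =>
        copDens C12 p.1 p.2 * pdFst C132 (cond12 C12 p.1 p.2) (cond32 C23 u3 p.2))
        (Ioc (0:ℝ) u1 ×ˢ Ioc (0:ℝ) u2) volume :=
      hint.mono_set (prod_mono (Ioc_subset_Icc_self.trans hI1) (Ioc_subset_Icc_self.trans hI2))
    rw [MeasureTheory.Measure.prod_restrict, ← MeasureTheory.Measure.volume_eq_prod]
    exact hint2
  calc vine C12 C23 C132 u1 u2 u3
      = ∫ v1 in (0:ℝ)..u1, ∫ v2 in (0:ℝ)..u2,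
          copDens C12 v1 v2 * pdFst C132 (cond12 C12 v1 v2) (cond32 C23 u3 v2) := by
        unfold vine
        apply intervalIntegral.integral_congr
        intro v1 hv1
        rw [Set.uIcc_of_le hu1.1] at hv1
        apply intervalIntegral.integral_congr
        intro v2 hv2
        rw [Set.uIcc_of_le hu2.1] at hv2
        exact stepA v1 (hI1 hv1) v2 (hI2 hv2)
    _ = ∫ v2 in (0:ℝ)..u2, ∫ v1 in (0:ℝ)..u1,
          copDens C12 v1 v2 * pdFst C132 (cond12 C12 v1 v2) (cond32 C23 u3 v2) := swap
    _ = ∫ v2 in (0:ℝ)..u2, C132 (cond12 C12 u1 v2, cond32 C23 u3 v2) := by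
        apply intervalIntegral.integral_congr
        intro v2 hv2
        rw [Set.uIcc_of_le hu2.1] at hv2
        exact stepB v2 (hI2 hv2)

end
end
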